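/- arXiv:2012.09497 — 3 statements merged into one kernel-verified Lean document; each statement's English description precedes it below -/
import Mathlib

section
/- For p̄ = 1/(1+γ̄) with γ̄ > 0, the tail binomial sum ∑_{m=2}^{n} C(n,m) p̄^m (1−p̄)^{n−m} satisfies lim_{γ̄→∞} (−log of this sum)/log γ̄ = 2, for every fixed n ≥ 2. -/
open Real Filter Finset

theorem two_or_more_errors_diversity (n : ℕ) (hn : 2 ≤ n) :
    Tendsto (fun γ : ℝ =>
        -Real.log (∑ m ∈ Finset.Icc 2 n,
            (n.choose m : ℝ) * (1 / (1 + γ)) ^ m * (γ / (1 + γ)) ^ (n - m)) / Real.log γ)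
      atTop (nhds 2) := by
  set T : ℝ → ℝ := fun γ => ∑ m ∈ Finset.Icc 2 n,
      (n.choose m : ℝ) * (1 / (1 + γ)) ^ (m - 2) * (γ / (1 + γ)) ^ (n - m) with hTdef
  -- 1/(1+γ) → 0
  have h1 : Tendsto (fun γ : ℝ => 1 / (1 + γ)) atTop (nhds 0) := by
    simp only [one_div]
    exact tendsto_inv_atTop_zero.comp (tendsto_atTop_add_const_left _ 1 tendsto_id)
  -- γ/(1+γ) → 1
  have h2 : Tendsto (fun γ : ℝ => γ / (1 + γ)) atTop (nhds 1) := by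
    have h : Tendsto (fun γ : ℝ => 1 - 1 / (1 + γ)) atTop (nhds 1) := by
      simpa using (tendsto_const_nhds (x := (1 : ℝ))).sub h1
    refine Tendsto.congr' ?_ h
    filter_upwards [eventually_gt_atTop (0 : ℝ)] with γ hγ
    have h0 : (1 : ℝ) + γ ≠ 0 := by positivity
    field_simp
    ring
  -- limit of T
  have hTlim : Tendsto T atTop (nhds (n.choose 2 : ℝ)) := by
    have key : Tendsto T atTop (nhds (∑ m ∈ Finset.Icc 2 n,
        (n.choose m : ℝ) * (0 : ℝ) ^ (m - 2) * (1 : ℝ) ^ (n - m))) := by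
      apply tendsto_finset_sum
      intro m _
      exact ((tendsto_const_nhds.mul (h1.pow (m - 2))).mul (h2.pow (n - m)))
    convert key using 2
    rw [Finset.sum_eq_single 2]
    · simp
    · intro m hm hm2
      have hne : m - 2 ≠ 0 := by
        simp only [Finset.mem_Icc] at hm
        omega
      simp [zero_pow hne]
    · intro h
      exact absurd (Finset.mem_Icc.mpr ⟨le_refl 2, hn⟩) h
  have hLpos : (0 : ℝ) < (n.choose 2 : ℝ) := by
    exact_mod_cast Nat.choose_pos hn
  have hTpos : ∀ᶠ γ : ℝ in atTop, 0 < T γ :=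
    hTlim.eventually (eventually_gt_nhds hLpos)
  -- (1+γ)/γ → 1
  have h3 : Tendsto (fun γ : ℝ => (1 + γ) / γ) atTop (nhds 1) := by
    have hinv : Tendsto (fun γ : ℝ => 1 / γ + 1) atTop (nhds 1) := by
      have := tendsto_inv_atTop_zero (𝕜 := ℝ)
      simpa using this.add (tendsto_const_nhds (x := (1 : ℝ)))
    refine Tendsto.congr' ?_ hinv
    filter_upwards [eventually_gt_atTop (0 : ℝ)] with γ hγ
    field_simp
  -- the auxiliary limit function
  have hmain : Tendsto (fun γ : ℝ =>
      2 + (2 * Real.log ((1 + γ) / γ) - Real.log (T γ)) / Real.log γ)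
      atTop (nhds 2) := by
    have hnum : Tendsto (fun γ : ℝ => 2 * Real.log ((1 + γ) / γ) - Real.log (T γ))
        atTop (nhds (2 * Real.log 1 - Real.log (n.choose 2 : ℝ))) := by
      exact ((Real.continuousAt_log one_ne_zero).tendsto.comp h3 |>.const_mul 2).sub
        ((Real.continuousAt_log hLpos.ne').tendsto.comp hTlim)
    have hfrac : Tendsto (fun γ : ℝ =>
        (2 * Real.log ((1 + γ) / γ) - Real.log (T γ)) / Real.log γ) atTop (nhds 0) :=
      hnum.div_atTop Real.tendsto_log_atTop
    simpa using (tendsto_const_nhds (x := (2 : ℝ))).add hfrac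
  refine Tendsto.congr' ?_ hmain
  filter_upwards [eventually_gt_atTop (1 : ℝ), hTpos] with γ hγ hTγ
  have hγ0 : (0 : ℝ) < γ := lt_trans one_pos hγ
  have h1γ : (0 : ℝ) < 1 + γ := by linarith
  have hlogγ : Real.log γ ≠ 0 := ne_of_gt (Real.log_pos hγ)
  -- factorization of the sum
  have hS : (∑ m ∈ Finset.Icc 2 n,
      (n.choose m : ℝ) * (1 / (1 + γ)) ^ m * (γ / (1 + γ)) ^ (n - m))
      = (1 / (1 + γ)) ^ 2 * T γ := by
    rw [hTdef, Finset.mul_sum]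
    apply Finset.sum_congr rfl
    intro m hm
    have hm2 : 2 ≤ m := (Finset.mem_Icc.mp hm).1
    have : (1 / (1 + γ)) ^ m = (1 / (1 + γ)) ^ 2 * (1 / (1 + γ)) ^ (m - 2) := by
      rw [← pow_add]
      congr 1
      omega
    rw [this]; ring
  have hfac_ne : ((1 : ℝ) / (1 + γ)) ^ 2 ≠ 0 := by positivity
  have hlogS : Real.log ((1 / (1 + γ)) ^ 2 * T γ)
      = -(2 * Real.log (1 + γ)) + Real.log (T γ) := by
    rw [Real.log_mul hfac_ne hTγ.ne', Real.log_pow, Real.log_div one_ne_zero h1γ.ne',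
      Real.log_one]
    push_cast
    ring
  have hlogdiv : Real.log ((1 + γ) / γ) = Real.log (1 + γ) - Real.log γ :=
    Real.log_div h1γ.ne' hγ0.ne'
  rw [hS, hlogS]
  rw [eq_comm]
  field_simp
  rw [hlogdiv]
  ring
end

section
/- For fixed n ≥ 2, the flip-decoder error bound P(γ̄) = (n−1)·p̄_2(γ̄)·(1−p̄_n(γ̄))^{n−1} + ∑_{m=2}^{n} C(n,m)(1/(1+γ̄))^m (γ̄/(1+γ̄))^{n−m}, with p̄_2(γ̄) = n(n−1)/[(γ̄+n−1)(γ̄+n)] and p̄_n(γ̄) = ∑_{k=0}^{n−1} n C(n−1,k)(−1)^k/(γ̄+k+1), satisfies lim_{γ̄→∞} (−log P(γ̄))/log γ̄ = 2. -/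
open Real Filter Finset

private lemma aux_div_zero (c d : ℝ) :
    Tendsto (fun γ : ℝ => c / (γ + d)) atTop (nhds 0) := by
  have h := (tendsto_atTop_add_const_right atTop d tendsto_id).inv_tendsto_atTop
  simpa [div_eq_mul_inv] using h.const_mul c

private lemma aux_div_one (d : ℝ) :
    Tendsto (fun γ : ℝ => γ / (γ + d)) atTop (nhds 1) := by
  have h : Tendsto (fun γ : ℝ => 1 - d / (γ + d)) atTop (nhds 1) := by
    simpa using tendsto_const_nhds.sub (aux_div_zero d d)
  refine Tendsto.congr' ?_ h
  filter_upwards [eventually_gt_atTop (|d| + 1)] with γ hγ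
  have hd := neg_abs_le d
  have hne : γ + d ≠ 0 := by nlinarith [abs_nonneg d]
  field_simp
  ring

private lemma key (P : ℝ → ℝ) (L : ℝ) (hL : 0 < L)
    (hQ : Tendsto (fun γ => P γ * γ ^ 2) atTop (nhds L)) :
    Tendsto (fun γ => -Real.log (P γ) / Real.log γ) atTop (nhds 2) := by
  have hlog : Tendsto (fun γ => Real.log (P γ * γ ^ 2)) atTop (nhds (Real.log L)) :=
    (Real.continuousAt_log hL.ne').tendsto.comp hQ
  have hdiv : Tendsto (fun γ => Real.log (P γ * γ ^ 2) / Real.log γ) atTop (nhds 0) :=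
    hlog.div_atTop Real.tendsto_log_atTop
  have h2 : Tendsto (fun γ => 2 - Real.log (P γ * γ ^ 2) / Real.log γ) atTop (nhds 2) := by
    simpa using tendsto_const_nhds.sub hdiv
  refine Tendsto.congr' ?_ h2
  filter_upwards [hQ.eventually (eventually_gt_nhds (half_lt_self hL)),
    eventually_gt_atTop 1] with γ hγ1 hγ2
  have hγ0 : 0 < γ := by linarith
  have hPγ : 0 < P γ := by nlinarith [sq_nonneg γ, half_pos hL]
  have hlogγ : 0 < Real.log γ := Real.log_pos hγ2
  rw [Real.log_mul hPγ.ne' (by positivity), Real.log_pow]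
  field_simp
  push_cast
  ring

theorem flip_decoder_diversity (n : ℕ) (hn : 2 ≤ n) :
    Tendsto (fun γ : ℝ =>
        -Real.log ((n - 1 : ℝ)
              * ((n : ℝ) * (n - 1) / ((γ + n - 1) * (γ + n)))
              * (1 - ∑ k ∈ Finset.range n, (n : ℝ) * (n - 1).choose k * (-1) ^ k / (γ + k + 1))
                  ^ (n - 1)
            + ∑ m ∈ Finset.Icc 2 n,
                (n.choose m : ℝ) * (1 / (1 + γ)) ^ m * (γ / (1 + γ)) ^ (n - m)) / Real.log γ)
      atTop (nhds 2) := by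
  have hn2 : (2 : ℝ) ≤ (n : ℝ) := by exact_mod_cast hn
  set L : ℝ := ((n : ℝ) - 1) * ((n : ℝ) * ((n : ℝ) - 1)) + (n.choose 2 : ℝ) with hLdef
  have hchoose : (1 : ℝ) ≤ (n.choose 2 : ℝ) := by
    exact_mod_cast Nat.succ_le_of_lt (Nat.choose_pos hn)
  have hL : 0 < L := by
    have h1 : (0 : ℝ) ≤ (n : ℝ) - 1 := by linarith
    have h2 : (0 : ℝ) ≤ ((n : ℝ) - 1) * ((n : ℝ) * ((n : ℝ) - 1)) :=
      mul_nonneg h1 (mul_nonneg (by linarith) h1)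
    rw [hLdef]; linarith
  -- S tends to 0
  have hS0 : Tendsto (fun γ : ℝ =>
      ∑ k ∈ Finset.range n, (n : ℝ) * (n - 1).choose k * (-1) ^ k / (γ + k + 1))
      atTop (nhds 0) := by
    have h := tendsto_finset_sum (Finset.range n) (fun k _ =>
      (by simpa [add_assoc] using
        aux_div_zero ((n : ℝ) * (n - 1).choose k * (-1) ^ k) ((k : ℝ) + 1) :
        Tendsto (fun γ : ℝ => (n : ℝ) * (n - 1).choose k * (-1) ^ k / (γ + k + 1))
          atTop (nhds 0)))
    simpa using h
  have hpow : Tendsto (fun γ : ℝ =>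
      (1 - ∑ k ∈ Finset.range n, (n : ℝ) * (n - 1).choose k * (-1) ^ k / (γ + k + 1)) ^ (n - 1))
      atTop (nhds 1) := by
    simpa using ((tendsto_const_nhds : Tendsto (fun _ : ℝ => (1 : ℝ)) atTop (nhds 1)).sub hS0).pow (n - 1)
  have h1 : Tendsto (fun γ : ℝ => γ / (1 + γ)) atTop (nhds 1) := by
    simpa [add_comm] using aux_div_one 1
  have h0 : Tendsto (fun γ : ℝ => 1 / (1 + γ)) atTop (nhds 0) := by
    simpa [add_comm] using aux_div_zero 1 1
  -- first piece
  have hAfull : Tendsto (fun γ : ℝ =>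
      ((n : ℝ) - 1) * ((n : ℝ) * ((n : ℝ) - 1)) *
        ((γ / (γ + ((n : ℝ) - 1))) * (γ / (γ + (n : ℝ)))) *
        (1 - ∑ k ∈ Finset.range n, (n : ℝ) * (n - 1).choose k * (-1) ^ k / (γ + k + 1)) ^ (n - 1))
      atTop (nhds (((n : ℝ) - 1) * ((n : ℝ) * ((n : ℝ) - 1)))) := by
    have := (((aux_div_one ((n : ℝ) - 1)).mul (aux_div_one (n : ℝ))).const_mul
      (((n : ℝ) - 1) * ((n : ℝ) * ((n : ℝ) - 1)))).mul hpow
    simpa using this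
  -- sum piece
  have hterm : ∀ m ∈ Finset.Icc 2 n, Tendsto (fun γ : ℝ =>
      (n.choose m : ℝ) * ((γ / (1 + γ)) ^ 2 * ((1 / (1 + γ)) ^ (m - 2) * (γ / (1 + γ)) ^ (n - m))))
      atTop (nhds ((n.choose m : ℝ) * (0 : ℝ) ^ (m - 2))) := by
    intro m _
    have := (((h1.pow 2).mul ((h0.pow (m - 2)).mul (h1.pow (n - m)))).const_mul
      (n.choose m : ℝ))
    simpa using this
  have hsumval : ∑ m ∈ Finset.Icc 2 n, (n.choose m : ℝ) * (0 : ℝ) ^ (m - 2) = (n.choose 2 : ℝ) := by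
    rw [Finset.sum_eq_single 2]
    · simp
    · intro b hb hb2
      have hb' : 0 < b - 2 := by
        simp only [Finset.mem_Icc] at hb; omega
      simp [zero_pow hb'.ne']
    · intro h; exact absurd (Finset.mem_Icc.mpr ⟨le_refl 2, hn⟩) h
  have hBfull : Tendsto (fun γ : ℝ =>
      ∑ m ∈ Finset.Icc 2 n,
        (n.choose m : ℝ) * ((γ / (1 + γ)) ^ 2 * ((1 / (1 + γ)) ^ (m - 2) * (γ / (1 + γ)) ^ (n - m))))
      atTop (nhds (n.choose 2 : ℝ)) := by
    have := tendsto_finset_sum (Finset.Icc 2 n) hterm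
    rwa [hsumval] at this
  have hQ' : Tendsto (fun γ : ℝ =>
      ((n : ℝ) - 1) * ((n : ℝ) * ((n : ℝ) - 1)) *
        ((γ / (γ + ((n : ℝ) - 1))) * (γ / (γ + (n : ℝ)))) *
        (1 - ∑ k ∈ Finset.range n, (n : ℝ) * (n - 1).choose k * (-1) ^ k / (γ + k + 1)) ^ (n - 1)
      + ∑ m ∈ Finset.Icc 2 n,
        (n.choose m : ℝ) * ((γ / (1 + γ)) ^ 2 * ((1 / (1 + γ)) ^ (m - 2) * (γ / (1 + γ)) ^ (n - m))))
      atTop (nhds L) := hAfull.add hBfull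
  refine key _ L hL ?_
  refine Tendsto.congr' ?_ hQ'
  filter_upwards [eventually_gt_atTop 1] with γ hγ
  have hγ0 : 0 < γ := by linarith
  have h1γ : (1 : ℝ) + γ ≠ 0 := by linarith
  have hd1 : γ + (n : ℝ) - 1 ≠ 0 := by nlinarith
  have hd1' : γ + ((n : ℝ) - 1) ≠ 0 := by nlinarith
  have hd2 : γ + (n : ℝ) ≠ 0 := by nlinarith
  rw [add_mul, Finset.sum_mul]
  congr 1
  · field_simp [hd1, hd1', hd2]
    ring
  · refine Finset.sum_congr rfl ?_
    intro m hm
    have hm2 : 2 ≤ m := (Finset.mem_Icc.mp hm).1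
    obtain ⟨k, rfl⟩ : ∃ k, m = k + 2 := ⟨m - 2, by omega⟩
    rw [pow_add]
    simp only [Nat.add_sub_cancel]
    field_simp
end

section
/- If β(γ) = sqrt(γ/(γ+1)) and the hard-decision bound is P(γ) = ∑_{q=t+1}^{n} C(n,q)((1−β)/2)^q ((1+β)/2)^{n−q}, then for fixed n and t < n, lim_{γ→∞} (−log P(γ))/log γ = t+1. -/
open Real Filter Finset

private lemma tendsto_beta : Tendsto (fun γ : ℝ => Real.sqrt (γ / (γ + 1))) atTop (nhds 1) := by
  have h0 : Tendsto (fun γ : ℝ => γ / (γ + 1)) atTop (nhds 1) := by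
    have hinv : Tendsto (fun γ : ℝ => (γ + 1)⁻¹) atTop (nhds 0) :=
      (tendsto_atTop_add_const_right _ 1 tendsto_id).inv_tendsto_atTop
    have := (tendsto_const_nhds (x := (1:ℝ)) (f := atTop)).sub hinv
    rw [sub_zero] at this
    refine this.congr' ?_
    filter_upwards [eventually_gt_atTop (0:ℝ)] with γ hγ
    field_simp
    ring
  have := (Real.continuous_sqrt.tendsto 1).comp h0
  simpa [Function.comp_def] using this

private lemma beta_lt_one {γ : ℝ} (hγ : 0 < γ) : Real.sqrt (γ / (γ + 1)) < 1 := by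
  have h := Real.sqrt_lt_sqrt (x := γ / (γ + 1)) (y := 1) (by positivity)
    (by rw [div_lt_one (by linarith)]; linarith)
  simpa using h

private lemma one_sub_beta {γ : ℝ} (hγ : 0 < γ) :
    1 - Real.sqrt (γ / (γ + 1)) = ((γ + 1) * (1 + Real.sqrt (γ / (γ + 1))))⁻¹ := by
  set β := Real.sqrt (γ / (γ + 1)) with hβ
  have hβ0 : 0 ≤ β := Real.sqrt_nonneg _
  have hsq : β ^ 2 = γ / (γ + 1) := Real.sq_sqrt (by positivity)
  have h1 : (1 - β) * ((γ + 1) * (1 + β)) = 1 := by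
    have : (1 - β) * ((γ + 1) * (1 + β)) = (γ + 1) * (1 - β ^ 2) := by ring
    rw [this, hsq]; field_simp
    ring
  exact eq_inv_of_mul_eq_one_left h1

theorem hard_decision_diversity (n t : ℕ) (ht : t < n) :
    Tendsto (fun γ : ℝ =>
        -Real.log (∑ q ∈ Finset.Icc (t + 1) n,
            (n.choose q : ℝ) * ((1 - Real.sqrt (γ / (γ + 1))) / 2) ^ q
              * ((1 + Real.sqrt (γ / (γ + 1))) / 2) ^ (n - q)) / Real.log γ)
      atTop (nhds (t + 1)) := by
  set β : ℝ → ℝ := fun γ => Real.sqrt (γ / (γ + 1)) with hβdef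
  set a : ℝ → ℝ := fun γ => (1 - β γ) / 2 with hadef
  set b : ℝ → ℝ := fun γ => (1 + β γ) / 2 with hbdef
  set S : ℝ → ℝ := fun γ =>
    ∑ q ∈ Finset.Icc (t + 1) n, (n.choose q : ℝ) * a γ ^ (q - (t + 1)) * b γ ^ (n - q)
    with hSdef
  set L : ℝ := ∑ q ∈ Finset.Icc (t + 1) n,
      (n.choose q : ℝ) * (0:ℝ) ^ (q - (t + 1)) * (1:ℝ) ^ (n - q) with hLdef
  have htmem : t + 1 ∈ Finset.Icc (t + 1) n := by
    simp [Finset.mem_Icc]; omega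
  have hLpos : 0 < L := by
    refine Finset.sum_pos' (fun q hq => by positivity) ⟨t+1, htmem, ?_⟩
    simp only [Nat.sub_self, pow_zero, mul_one, one_pow]
    exact_mod_cast Nat.choose_pos ht
  -- limits of a, b, S
  have hta : Tendsto a atTop (nhds 0) := by
    have := (tendsto_const_nhds (x := (1:ℝ)) (f := atTop)).sub tendsto_beta
    have h2 := this.div_const 2
    simpa [hadef, hβdef] using h2
  have htb : Tendsto b atTop (nhds 1) := by
    have := (tendsto_const_nhds (x := (1:ℝ)) (f := atTop)).add tendsto_beta
    have h2 := this.div_const 2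
    norm_num at h2
    simpa [hbdef, hβdef] using h2
  have htS : Tendsto S atTop (nhds L) := by
    apply tendsto_finset_sum
    intro q hq
    exact (tendsto_const_nhds.mul (hta.pow _)).mul (htb.pow _)
  have hlogγinv : Tendsto (fun γ : ℝ => (Real.log γ)⁻¹) atTop (nhds 0) :=
    Real.tendsto_log_atTop.inv_tendsto_atTop
  have hlogS : Tendsto (fun γ => Real.log (S γ) * (Real.log γ)⁻¹) atTop (nhds 0) := by
    have h1 : Tendsto (fun γ => Real.log (S γ)) atTop (nhds (Real.log L)) :=
      ((Real.continuousAt_log hLpos.ne').tendsto).comp htS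
    simpa using h1.mul hlogγinv
  have hlog1β : Tendsto (fun γ => Real.log (1 + β γ)) atTop (nhds (Real.log 2)) := by
    have h2 : Tendsto (fun γ => 1 + β γ) atTop (nhds 2) := by
      have := (tendsto_const_nhds (x := (1:ℝ)) (f := atTop)).add tendsto_beta
      norm_num at this; exact this
    exact ((Real.continuousAt_log (by norm_num)).tendsto).comp h2
  have hratio : Tendsto (fun γ => Real.log (γ + 1) / Real.log γ) atTop (nhds 1) := by
    have h1 : Tendsto (fun γ : ℝ => Real.log (1 + γ⁻¹)) atTop (nhds 0) := by
      have h2 : Tendsto (fun γ : ℝ => 1 + γ⁻¹) atTop (nhds 1) := by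
        have := (tendsto_const_nhds (x := (1:ℝ)) (f := atTop)).add tendsto_inv_atTop_zero
        norm_num at this; exact this
      have := ((Real.continuousAt_log (by norm_num)).tendsto).comp h2
      simpa [Function.comp_def] using this
    have h3 : Tendsto (fun γ : ℝ => 1 + Real.log (1 + γ⁻¹) * (Real.log γ)⁻¹) atTop (nhds 1) := by
      have := (tendsto_const_nhds (x := (1:ℝ)) (f := atTop)).add (h1.mul hlogγinv)
      norm_num at this; exact this
    refine h3.congr' ?_
    filter_upwards [eventually_gt_atTop (1:ℝ)] with γ hγ
    have hγ0 : (0:ℝ) < γ := by linarith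
    have hlogpos : 0 < Real.log γ := Real.log_pos hγ
    have : Real.log (γ + 1) = Real.log γ + Real.log (1 + γ⁻¹) := by
      rw [← Real.log_mul hγ0.ne' (by positivity)]
      congr 1; field_simp
    rw [this]
    field_simp
  -- the target function g
  have hg : Tendsto (fun γ => ((t:ℝ) + 1) *
      (Real.log (γ + 1) / Real.log γ + (Real.log (1 + β γ) + Real.log 2) * (Real.log γ)⁻¹)
      - Real.log (S γ) * (Real.log γ)⁻¹) atTop (nhds ((t:ℝ) + 1)) := by
    have h1 : Tendsto (fun γ => Real.log (γ + 1) / Real.log γ +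
        (Real.log (1 + β γ) + Real.log 2) * (Real.log γ)⁻¹) atTop (nhds 1) := by
      have := hratio.add ((hlog1β.add (tendsto_const_nhds (x := Real.log 2))).mul hlogγinv)
      norm_num at this; exact this
    have := ((tendsto_const_nhds (x := ((t:ℝ)+1)) (f := atTop)).mul h1).sub hlogS
    norm_num at this; exact this
  refine hg.congr' ?_
  filter_upwards [eventually_gt_atTop (1:ℝ)] with γ hγ
  have hγ0 : (0:ℝ) < γ := by linarith
  have hβ0 : 0 ≤ β γ := Real.sqrt_nonneg _
  have hβ1 : β γ < 1 := beta_lt_one hγ0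
  have ha0 : 0 < a γ := by simp only [hadef]; linarith
  have hb0 : 0 < b γ := by simp only [hbdef]; linarith
  have hlogpos : 0 < Real.log γ := Real.log_pos hγ
  have hSpos : 0 < S γ := by
    refine Finset.sum_pos' (fun q hq => by positivity) ⟨t+1, htmem, ?_⟩
    simp only [Nat.sub_self, pow_zero, mul_one]
    exact mul_pos (by exact_mod_cast Nat.choose_pos ht) (pow_pos hb0 _)
  -- P = a^(t+1) * S
  have hP : (∑ q ∈ Finset.Icc (t + 1) n,
      (n.choose q : ℝ) * ((1 - Real.sqrt (γ / (γ + 1))) / 2) ^ q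
        * ((1 + Real.sqrt (γ / (γ + 1))) / 2) ^ (n - q)) = a γ ^ (t + 1) * S γ := by
    rw [hSdef, Finset.mul_sum]
    apply Finset.sum_congr rfl
    intro q hq
    have hq1 : t + 1 ≤ q := (Finset.mem_Icc.mp hq).1
    have : a γ ^ (t+1) * ((n.choose q : ℝ) * a γ ^ (q - (t + 1)) * b γ ^ (n - q))
        = (n.choose q : ℝ) * (a γ ^ (t+1) * a γ ^ (q - (t + 1))) * b γ ^ (n - q) := by ring
    rw [this, ← pow_add, Nat.add_sub_cancel' hq1]
  rw [hP, Real.log_mul (by positivity) hSpos.ne', Real.log_pow]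
  -- log a = -(log (γ+1) + log (1+β) + log 2)
  have hloga : Real.log (a γ) = -(Real.log (γ + 1) + Real.log (1 + β γ) + Real.log 2) := by
    have h1 : a γ = (((γ + 1) * (1 + β γ)) * 2)⁻¹ := by
      simp only [hadef]
      rw [one_sub_beta hγ0, div_eq_mul_inv, ← mul_inv]
    rw [h1, Real.log_inv, Real.log_mul (by positivity) (by norm_num),
      Real.log_mul (by positivity) (by positivity)]
  rw [hloga]
  push_cast
  field_simp
  ring
end
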